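/- Fix a real k ≥ 1. Define a function 𝒜(t, n, s) for integers 1 ≤ n ≤ t and 0 ≤ s ≤ t by: 𝒜(t, 1, s) = k·s + (t-s); and for n ≥ 2, 𝒜(t, n, s) = 𝒜(t-1, n-1, s) · (1 + 𝒜(t-1, n, s)) / (1 + 𝒜(t-1, n-1, s)) when s ≤ t-1, and 𝒜(t, n, t) = 𝒜(t-1, n-1, t-1) · (k + 𝒜(t-1, n, t-1)) / (k + 𝒜(t-1, n-1, t-1)) (with 𝒜(t-1, t, ·) interpreted via 𝒜(t, t, s) = k/(s + k·(t-s))). Then for all integers t ≥ 1, 1 ≤ n ≤ t, and 0 ≤ s ≤ t with n - 1 ≤ s, we have (t + s·(k-1) - k·(n-1))/n ≤ 𝒜(t, n, s) ≤ (t + s·(k-1) - (n-1))/n. -/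

import Mathlib

lemma frac_mono (c a b a' b' : ℝ) (hc : 0 < c) (ha' : 0 < a') (hb' : 0 ≤ b')
    (haa : a' ≤ a) (hbb : b' ≤ b) :
    a' * (c + b') / (c + a') ≤ a * (c + b) / (c + a) := by
  have h1 : 0 < c + a' := by linarith
  have h2 : 0 < c + a := by linarith
  rw [div_le_div_iff₀ h1 h2]
  nlinarith [mul_nonneg (mul_nonneg ha'.le (by linarith : (0:ℝ) ≤ a)) (by linarith : 0 ≤ b - b'),
    mul_nonneg (mul_nonneg hc.le hc.le) (by linarith : 0 ≤ a - a'),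
    mul_nonneg hc.le (by nlinarith : (0:ℝ) ≤ a*b - a'*b')]

lemma key_reg_low (k N u : ℝ) (hk : 1 ≤ k) (hN : 2 ≤ N) (hu : 0 < u) :
    (u+1)/N ≤ (u+k)/(N-1) * (1 + u/N) / (1 + (u+k)/(N-1)) := by
  have hN0 : (0:ℝ) < N := by linarith
  have hN1 : (0:ℝ) < N - 1 := by linarith
  have hd : (0:ℝ) < N - 1 + u + k := by linarith
  have heq : (u+k)/(N-1) * (1 + u/N) / (1 + (u+k)/(N-1))
      = (u+k)*(N+u) / (N*(N-1+u+k)) := by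
    have h1 : (N:ℝ) - 1 ≠ 0 := by linarith
    have h3 : 1 + (u+k)/(N-1) ≠ 0 := by positivity
    field_simp
    ring
  rw [heq, div_le_div_iff₀ hN0 (by positivity)]
  nlinarith [mul_nonneg (by linarith : (0:ℝ) ≤ k - 1) (by linarith : (0:ℝ) ≤ N - 1), hu.le]

lemma key_reg_high (N v : ℝ) (hN : 2 ≤ N) (hv : 0 < v) :
    (v+1)/(N-1) * (1 + v/N) / (1 + (v+1)/(N-1)) = (v+1)/N := by
  have hN0 : (N:ℝ) ≠ 0 := by linarith
  have hN1 : (N:ℝ) - 1 ≠ 0 := by linarith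
  have h2 : (N:ℝ) + v ≠ 0 := by linarith
  field_simp
  rw [div_eq_one_iff_eq (by intro h; linarith)]; ring

lemma key_spec_low (k N m : ℝ) (hk : 1 ≤ k) (hN : 2 ≤ N) (hm : 1 ≤ m) :
    k*(m+1)/N ≤ k*(m+1)/(N-1) * (k + k*m/N) / (k + k*(m+1)/(N-1)) := by
  have hN0 : (N:ℝ) ≠ 0 := by linarith
  have hN1 : (N:ℝ) - 1 ≠ 0 := by linarith
  have hk0 : (0:ℝ) < k := by linarith
  have h2 : k*(N-1) + k*(m+1) ≠ 0 := by nlinarith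
  have heq : k*(m+1)/(N-1) * (k + k*m/N) / (k + k*(m+1)/(N-1)) = k*(m+1)/N := by
    field_simp
    rw [div_eq_one_iff_eq (by intro h; linarith)]; ring
  rw [heq]

lemma key_spec_high (k N w : ℝ) (hk : 1 ≤ k) (hN : 2 ≤ N) (hw : 0 < w) :
    (w+1)/(N-1) * (k + w/N) / (k + (w+1)/(N-1)) ≤ (w+k)/N := by
  have hN0 : (0:ℝ) < N := by linarith
  have hN1 : (0:ℝ) < N - 1 := by linarith
  have hk0 : (0:ℝ) < k := by linarith
  have hd : (0:ℝ) < k*(N-1) + w + 1 := by nlinarith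
  have heq : (w+1)/(N-1) * (k + w/N) / (k + (w+1)/(N-1))
      = (w+1)*(k*N+w) / (N*(k*(N-1)+w+1)) := by
    have h3 : k + (w+1)/(N-1) ≠ 0 := by positivity
    field_simp
    ring
  rw [heq, div_le_div_iff₀ (by positivity) hN0]
  nlinarith [mul_nonneg (by linarith : (0:ℝ) ≤ k - 1) (by linarith : (0:ℝ) ≤ N - 1),
    mul_nonneg (mul_nonneg (by linarith : (0:ℝ) ≤ k - 1) (by linarith : (0:ℝ) ≤ N - 1)) hk0.le]

theorem stmt_6 (k : ℝ) (hk : 1 ≤ k) (A : ℕ → ℕ → ℕ → ℝ)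
    (hbase : ∀ t s : ℕ, 1 ≤ t → s ≤ t → A t 1 s = k * s + ((t : ℝ) - s))
    (hdiag : ∀ t s : ℕ, 1 ≤ t → s ≤ t → A t t s = k / (s + k * ((t : ℝ) - s)))
    (hreg : ∀ t n s : ℕ, 2 ≤ n → n < t → s ≤ t - 1 →
      A t n s = A (t - 1) (n - 1) s * (1 + A (t - 1) n s) / (1 + A (t - 1) (n - 1) s))
    (hspec : ∀ t n : ℕ, 2 ≤ n → n < t →
      A t n t = A (t - 1) (n - 1) (t - 1) * (k + A (t - 1) n (t - 1)) /
        (k + A (t - 1) (n - 1) (t - 1))) :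
    ∀ t n s : ℕ, 1 ≤ n → n ≤ t → s ≤ t → n - 1 ≤ s →
      ((t : ℝ) + s * (k - 1) - k * ((n : ℝ) - 1)) / n ≤ A t n s ∧
        A t n s ≤ ((t : ℝ) + s * (k - 1) - ((n : ℝ) - 1)) / n := by
  intro t
  induction t with
  | zero => intro n s hn hnt _ _; omega
  | succ t ih =>
    intro n s hn1 hnt hst hns
    by_cases hone : n = 1
    · subst hone
      rw [hbase (t+1) s (by omega) hst]
      push_cast
      norm_num
      constructor <;> linarith
    have hn2 : 2 ≤ n := by omega
    by_cases hdg : n = t + 1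
    · -- diagonal case
      subst hdg
      rw [hdiag (t+1) s (by omega) hst]
      have hs2 : s = t ∨ s = t + 1 := by omega
      have hT : (0:ℝ) < (t:ℝ) + 1 := by positivity
      obtain h | h := hs2
      · rw [h]
        push_cast
        have hD : (0:ℝ) < (t:ℝ) + k * ((t:ℝ) + 1 - (t:ℝ)) := by
          have : (0:ℝ) ≤ (t:ℝ) := Nat.cast_nonneg t
          nlinarith
        constructor
        · rw [div_le_div_iff₀ hT hD]
          nlinarith [mul_nonneg (by linarith : (0:ℝ) ≤ k - 1) (Nat.cast_nonneg (α := ℝ) t)]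
        · rw [div_le_div_iff₀ hD hT]
          nlinarith [mul_nonneg (mul_nonneg (by linarith : (0:ℝ) ≤ k - 1)
              (Nat.cast_nonneg (α := ℝ) t)) (by linarith : (0:ℝ) ≤ k + (t:ℝ) - 1)]
      · rw [h]
        push_cast
        have hD : (0:ℝ) < (t:ℝ) + 1 + k * ((t:ℝ) + 1 - ((t:ℝ) + 1)) := by
          have : (0:ℝ) ≤ (t:ℝ) := Nat.cast_nonneg t
          nlinarith
        constructor
        · rw [div_le_div_iff₀ hT hD]
          nlinarith
        · rw [div_le_div_iff₀ hD hT]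
          nlinarith [mul_nonneg (by linarith : (0:ℝ) ≤ k - 1) (Nat.cast_nonneg (α := ℝ) t)]
    -- now 2 ≤ n ≤ t
    have hnt' : n ≤ t := by omega
    have hN2 : (2:ℝ) ≤ (n:ℝ) := by exact_mod_cast hn2
    have hNT : (n:ℝ) ≤ (t:ℝ) := by exact_mod_cast hnt'
    have hN1 : (0:ℝ) < (n:ℝ) - 1 := by linarith
    have hN0 : (0:ℝ) < (n:ℝ) := by linarith
    have hcast1 : ((n - 1 : ℕ) : ℝ) = (n:ℝ) - 1 := by
      push_cast [Nat.cast_sub hn1]; ring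
    by_cases hs : s ≤ t
    · -- regular recursion
      have hS : (n:ℝ) - 1 ≤ (s:ℝ) := by
        have : (n:ℕ) - 1 ≤ s := hns
        have h' : ((n-1:ℕ):ℝ) ≤ (s:ℝ) := by exact_mod_cast this
        rw [hcast1] at h'; exact h'
      have hST : (s:ℝ) ≤ (t:ℝ) := by exact_mod_cast hs
      have hA := hreg (t+1) n s hn2 (by omega) (by omega)
      simp only [Nat.add_sub_cancel] at hA
      obtain ⟨ha1, ha2⟩ := ih (n-1) s (by omega) (by omega) hs (by omega)
      obtain ⟨hb1, hb2⟩ := ih n s (by omega) hnt' hs hns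
      rw [hcast1] at ha1 ha2
      -- abbreviations
      set u : ℝ := (t:ℝ) + (s:ℝ)*(k-1) - k*((n:ℝ)-1) with hu_def
      set v : ℝ := (t:ℝ) + (s:ℝ)*(k-1) - ((n:ℝ)-1) with hv_def
      have hkS : (0:ℝ) ≤ (k-1)*((s:ℝ) - ((n:ℝ)-1)) :=
        mul_nonneg (by linarith) (by linarith)
      have hu : 0 < u := by rw [hu_def]; nlinarith
      have hv : 0 < v := by rw [hv_def]; nlinarith
      have ha1' : (u+k)/((n:ℝ)-1) ≤ A t (n-1) s := by
        rw [show u + k = (t:ℝ) + (s:ℝ)*(k-1) - k*((n:ℝ) - 1 - 1) by rw [hu_def]; ring]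
        exact ha1
      have ha2' : A t (n-1) s ≤ (v+1)/((n:ℝ)-1) := by
        rw [show v + 1 = (t:ℝ) + (s:ℝ)*(k-1) - ((n:ℝ) - 1 - 1) by rw [hv_def]; ring]
        exact ha2
      have hb1' : u/(n:ℝ) ≤ A t n s := hb1
      have hb2' : A t n s ≤ v/(n:ℝ) := hb2
      have hap : 0 < (u+k)/((n:ℝ)-1) := by positivity
      have hbp : (0:ℝ) ≤ u/(n:ℝ) := by positivity
      constructor
      · have hgoal : ((t:ℝ)+1 + (s:ℝ)*(k-1) - k*((n:ℝ)-1))/(n:ℝ) = (u+1)/(n:ℝ) := by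
          rw [hu_def]; ring
        push_cast
        rw [hgoal, hA]
        calc (u+1)/(n:ℝ) ≤ (u+k)/((n:ℝ)-1) * (1 + u/(n:ℝ)) / (1 + (u+k)/((n:ℝ)-1)) :=
              key_reg_low k (n:ℝ) u hk hN2 hu
          _ ≤ A t (n-1) s * (1 + A t n s) / (1 + A t (n-1) s) :=
              frac_mono 1 _ _ _ _ one_pos hap hbp ha1' hb1'
      · have hgoal : ((t:ℝ)+1 + (s:ℝ)*(k-1) - ((n:ℝ)-1))/(n:ℝ) = (v+1)/(n:ℝ) := by
          rw [hv_def]; ring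
        push_cast
        rw [hgoal, hA]
        calc A t (n-1) s * (1 + A t n s) / (1 + A t (n-1) s)
            ≤ (v+1)/((n:ℝ)-1) * (1 + v/(n:ℝ)) / (1 + (v+1)/((n:ℝ)-1)) :=
              frac_mono 1 _ _ _ _ one_pos (lt_of_lt_of_le hap ha1') (le_trans hbp hb1')
                ha2' hb2'
          _ = (v+1)/(n:ℝ) := key_reg_high (n:ℝ) v hN2 hv
    · -- special recursion, s = t + 1
      have hseq : s = t + 1 := by omega
      subst hseq
      have hA := hspec (t+1) n hn2 (by omega)
      simp only [Nat.add_sub_cancel] at hA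
      obtain ⟨ha1, ha2⟩ := ih (n-1) t (by omega) (by omega) le_rfl (by omega)
      obtain ⟨hb1, hb2⟩ := ih n t (by omega) hnt' le_rfl (by omega)
      rw [hcast1] at ha1 ha2
      set m : ℝ := (t:ℝ) - (n:ℝ) + 1 with hm_def
      set w : ℝ := (t:ℝ)*k - ((n:ℝ)-1) with hw_def
      have hm : 1 ≤ m := by rw [hm_def]; linarith
      have hw : 0 < w := by rw [hw_def]; nlinarith
      have ha1' : k*(m+1)/((n:ℝ)-1) ≤ A t (n-1) t := by
        rw [show k*(m+1) = (t:ℝ) + (t:ℝ)*(k-1) - k*((n:ℝ) - 1 - 1) by rw [hm_def]; ring]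
        exact ha1
      have ha2' : A t (n-1) t ≤ (w+1)/((n:ℝ)-1) := by
        rw [show w + 1 = (t:ℝ) + (t:ℝ)*(k-1) - ((n:ℝ) - 1 - 1) by rw [hw_def]; ring]
        exact ha2
      have hb1' : k*m/(n:ℝ) ≤ A t n t := by
        rw [show k*m = (t:ℝ) + (t:ℝ)*(k-1) - k*((n:ℝ) - 1) by rw [hm_def]; ring]
        exact hb1
      have hb2' : A t n t ≤ w/(n:ℝ) := by
        rw [show w = (t:ℝ) + (t:ℝ)*(k-1) - ((n:ℝ) - 1) by rw [hw_def]; ring]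
        exact hb2
      have hk0 : (0:ℝ) < k := by linarith
      have hap : 0 < k*(m+1)/((n:ℝ)-1) := by positivity
      have hbp : (0:ℝ) ≤ k*m/(n:ℝ) := by positivity
      constructor
      · have hgoal : ((t:ℝ)+1 + ((t:ℝ)+1)*(k-1) - k*((n:ℝ)-1))/(n:ℝ) = k*(m+1)/(n:ℝ) := by
          rw [hm_def]; ring
        push_cast
        rw [hgoal, hA]
        calc k*(m+1)/(n:ℝ)
            ≤ k*(m+1)/((n:ℝ)-1) * (k + k*m/(n:ℝ)) / (k + k*(m+1)/((n:ℝ)-1)) :=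
              key_spec_low k (n:ℝ) m hk hN2 hm
          _ ≤ A t (n-1) t * (k + A t n t) / (k + A t (n-1) t) :=
              frac_mono k _ _ _ _ hk0 hap hbp ha1' hb1'
      · have hgoal : ((t:ℝ)+1 + ((t:ℝ)+1)*(k-1) - ((n:ℝ)-1))/(n:ℝ) = (w+k)/(n:ℝ) := by
          rw [hw_def]; ring
        push_cast
        rw [hgoal, hA]
        calc A t (n-1) t * (k + A t n t) / (k + A t (n-1) t)
            ≤ (w+1)/((n:ℝ)-1) * (k + w/(n:ℝ)) / (k + (w+1)/((n:ℝ)-1)) :=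
              frac_mono k _ _ _ _ hk0 (lt_of_lt_of_le hap ha1') (le_trans hbp hb1')
                ha2' hb2'
          _ ≤ (w+k)/(n:ℝ) := key_spec_high k (n:ℝ) w hk hN2 hw
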